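/- For a finite cyclic group $G$, the augmentation ideal $IG$ and its dual lattice $IG^* = \mathrm{Hom}_{\mathbb{Z}}(IG, \mathbb{Z})$ are isomorphic as $\mathbb{Z}G$-modules. -/

import Mathlib

/-- The augmentation map `ℤ[G] → ℤ`, sending each group element to `1`. -/
noncomputable def augmentationMap (G : Type*) [Group G] :
    MonoidAlgebra ℤ G →ₐ[ℤ] ℤ :=
  MonoidAlgebra.lift ℤ ℤ G 1

/-- The augmentation ideal `IG`, the kernel of the augmentation map, viewed as a
`ℤ`-submodule of `ℤ[G]`. -/
noncomputable def augmentationIdeal (G : Type*) [Group G] :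
    Submodule ℤ (MonoidAlgebra ℤ G) :=
  LinearMap.ker (augmentationMap G).toLinearMap

namespace AugAux

set_option linter.unusedSectionVars false

open MonoidAlgebra Finsupp

variable {G : Type*} [Group G] [Fintype G]

instance instCoeFunMA {H : Type*} : CoeFun (MonoidAlgebra ℤ H) (fun _ => H → ℤ) := ⟨fun f => f.coeff⟩

lemma aug_apply (f : MonoidAlgebra ℤ G) : augmentationMap G f = ∑ g : G, f g := by
  classical
  rw [augmentationMap, MonoidAlgebra.lift_apply]
  simp only [MonoidHom.one_apply, smul_eq_mul, mul_one]
  exact Finsupp.sum_fintype f.coeff (fun _ b => b) (fun _ => rfl)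

lemma mem_aug {f : MonoidAlgebra ℤ G} :
    f ∈ augmentationIdeal G ↔ ∑ g : G, f g = 0 := by
  rw [augmentationIdeal, LinearMap.mem_ker, AlgHom.toLinearMap_apply, aug_apply]

omit [Group G] in
lemma sum_single_apply (g : G) (c : ℤ) :
    ∑ g' : G, (MonoidAlgebra.single g c : MonoidAlgebra ℤ G) g' = c := by
  classical
  simp [MonoidAlgebra.coeff_single, Finsupp.single_apply]

lemma sub_apply' (f h : MonoidAlgebra ℤ G) (x : G) : (f - h) x = f x - h x := rfl

lemma add_apply' (f h : MonoidAlgebra ℤ G) (x : G) : (f + h) x = f x + h x := rfl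

lemma smul_apply' (c : ℤ) (f : MonoidAlgebra ℤ G) (x : G) : (c • f) x = c * f x := rfl

lemma basis_mem (g : G) : (MonoidAlgebra.single g 1 - 1 : MonoidAlgebra ℤ G) ∈ augmentationIdeal G := by
  classical
  rw [mem_aug]
  simp only [sub_apply', Finset.sum_sub_distrib]
  rw [MonoidAlgebra.one_def, sum_single_apply, sum_single_apply, sub_self]

lemma decomp (f : MonoidAlgebra ℤ G) :
    ∑ g : G, f g • (MonoidAlgebra.single g 1 : MonoidAlgebra ℤ G) = f := by
  classical
  ext h
  rw [MonoidAlgebra.coeff_sum, Finsupp.finset_sum_apply]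
  simp [MonoidAlgebra.coeff_single, Finsupp.single_apply]


noncomputable def N : MonoidAlgebra ℤ G := ∑ g : G, MonoidAlgebra.single g 1

lemma N_apply (g : G) : (N : MonoidAlgebra ℤ G) g = 1 := by
  classical
  rw [N, MonoidAlgebra.coeff_sum, Finsupp.finset_sum_apply]
  simp [MonoidAlgebra.coeff_single, Finsupp.single_apply]

/-- The standard pairing on `ℤ[G]`. -/
noncomputable def pairing : MonoidAlgebra ℤ G →ₗ[ℤ] MonoidAlgebra ℤ G →ₗ[ℤ] ℤ :=
  LinearMap.mk₂ ℤ (fun f z => ∑ g : G, f g * z g)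
    (fun f f' z => by simp [add_apply', add_mul, Finset.sum_add_distrib])
    (fun c f z => by
      show ∑ g : G, (c • f) g * z g = c • ∑ g : G, f g * z g
      rw [smul_eq_mul, Finset.mul_sum]
      exact Finset.sum_congr rfl fun g _ => by rw [smul_apply']; ring)
    (fun f z z' => by simp [add_apply', mul_add, Finset.sum_add_distrib])
    (fun c f z => by
      show ∑ g : G, f g * (c • z) g = c • ∑ g : G, f g * z g
      rw [smul_eq_mul, Finset.mul_sum]
      exact Finset.sum_congr rfl fun g _ => by rw [smul_apply']; ring)

/-- The map `ℤ[G] → IG*`. -/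
noncomputable def F : MonoidAlgebra ℤ G →ₗ[ℤ] Module.Dual ℤ (augmentationIdeal G) :=
  (pairing).compl₂ (augmentationIdeal G).subtype

lemma F_apply (f : MonoidAlgebra ℤ G) (z : augmentationIdeal G) :
    F f z = ∑ g : G, f g * (z : MonoidAlgebra ℤ G) g := rfl

variable (σ : G)

lemma mul_basis_mem (y : MonoidAlgebra ℤ G) :
    y * (MonoidAlgebra.single σ 1 - 1) ∈ augmentationIdeal G := by
  have : augmentationMap G (y * (MonoidAlgebra.single σ 1 - 1)) = 0 := by
    rw [map_mul]
    have h0 : augmentationMap G (MonoidAlgebra.single σ 1 - 1) = 0 := by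
      rw [aug_apply]
      exact mem_aug.mp (basis_mem σ)
    rw [h0, mul_zero]
  rwa [mem_aug, ← aug_apply]

/-- The map `ℤ[G] → IG`, `y ↦ y * (σ - 1)`. -/
noncomputable def M : MonoidAlgebra ℤ G →ₗ[ℤ] augmentationIdeal G :=
  LinearMap.codRestrict (augmentationIdeal G)
    (LinearMap.mulRight ℤ (MonoidAlgebra.single σ 1 - 1)) (mul_basis_mem σ)

lemma M_coe (y : MonoidAlgebra ℤ G) :
    (M σ y : MonoidAlgebra ℤ G) = y * (MonoidAlgebra.single σ 1 - 1) := rfl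


lemma sum_mul_single (y : MonoidAlgebra ℤ G) (g : G) (c : ℤ) :
    ∑ h : G, y h * (MonoidAlgebra.single g c : MonoidAlgebra ℤ G) h = y g * c := by
  classical
  simp [MonoidAlgebra.coeff_single, Finsupp.single_apply]

lemma F_N : F (N : MonoidAlgebra ℤ G) = 0 := by
  ext z
  rw [F_apply]
  simp only [N_apply, one_mul]
  exact mem_aug.mp z.2

lemma ker_F_eq :
    LinearMap.ker (F : MonoidAlgebra ℤ G →ₗ[ℤ] _) = Submodule.span ℤ {(N : MonoidAlgebra ℤ G)} := by
  classical
  apply le_antisymm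
  · intro y hy
    rw [LinearMap.mem_ker] at hy
    have h5 : ∀ g : G, y g = y 1 := by
      intro g
      have h := congrArg (fun φ : Module.Dual ℤ (augmentationIdeal G) =>
        φ ⟨MonoidAlgebra.single g 1 - 1, basis_mem g⟩) hy
      simp only [LinearMap.zero_apply] at h
      rw [F_apply] at h
      simp only [sub_apply'] at h
      have hsum : ∑ x : G, y x * ((MonoidAlgebra.single g 1 : MonoidAlgebra ℤ G) x
          - (1 : MonoidAlgebra ℤ G) x) = y g - y 1 := by
        calc ∑ x : G, y x * ((MonoidAlgebra.single g 1 : MonoidAlgebra ℤ G) x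
              - (1 : MonoidAlgebra ℤ G) x)
            = ∑ x : G, (y x * (MonoidAlgebra.single g 1 : MonoidAlgebra ℤ G) x
              - y x * (MonoidAlgebra.single 1 1 : MonoidAlgebra ℤ G) x) := by
              rw [MonoidAlgebra.one_def]
              exact Finset.sum_congr rfl fun x _ => by ring
          _ = y g - y 1 := by
              rw [Finset.sum_sub_distrib, sum_mul_single, sum_mul_single, mul_one, mul_one]
      rw [hsum, sub_eq_zero] at h
      exact h
    refine Submodule.mem_span_singleton.mpr ⟨y 1, ?_⟩
    ext g
    rw [smul_apply', N_apply, mul_one, h5 g]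
  · rw [Submodule.span_le, Set.singleton_subset_iff]
    exact LinearMap.mem_ker.mpr F_N

variable (σ : G)

lemma N_mul_single : (N : MonoidAlgebra ℤ G) * MonoidAlgebra.single σ 1 = N := by
  ext g
  rw [MonoidAlgebra.coeff_mul_single_apply, N_apply, N_apply, mul_one]

lemma M_N : M σ (N : MonoidAlgebra ℤ G) = 0 := by
  apply Subtype.ext
  rw [M_coe, mul_sub, mul_one, N_mul_single, sub_self]
  rfl

lemma ker_M_eq (hσ : ∀ g : G, g ∈ Submonoid.powers σ) :
    LinearMap.ker (M σ : MonoidAlgebra ℤ G →ₗ[ℤ] _)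
      = Submodule.span ℤ {(N : MonoidAlgebra ℤ G)} := by
  apply le_antisymm
  · intro y hy
    rw [LinearMap.mem_ker] at hy
    have h1 : y * (MonoidAlgebra.single σ 1 - 1) = 0 := by
      have := congrArg (Subtype.val) hy
      rwa [M_coe] at this
    have h2 : y * MonoidAlgebra.single σ 1 = y := by
      rwa [mul_sub, mul_one, sub_eq_zero] at h1
    have h3 : ∀ x : G, y (x * σ) = y x := by
      intro x
      have := congrArg (fun f : MonoidAlgebra ℤ G => f (x * σ)) h2
      simp only [MonoidAlgebra.coeff_mul_single_apply, mul_one, mul_inv_cancel_right] at this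
      exact this.symm
    have h4 : ∀ (k : ℕ) (x : G), y (x * σ ^ k) = y x := by
      intro k
      induction k with
      | zero => simp
      | succ n ih => intro x; rw [pow_succ, ← mul_assoc, h3, ih]
    have h5 : ∀ g : G, y g = y 1 := by
      intro g
      obtain ⟨k, hk⟩ := hσ g
      rw [← hk]
      simpa using h4 k 1
    refine Submodule.mem_span_singleton.mpr ⟨y 1, ?_⟩
    ext g
    rw [smul_apply', N_apply, mul_one, h5 g]
  · rw [Submodule.span_le, Set.singleton_subset_iff]
    exact LinearMap.mem_ker.mpr (M_N σ)

lemma M_surj (hσ : ∀ g : G, g ∈ Submonoid.powers σ) :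
    Function.Surjective (M σ : MonoidAlgebra ℤ G →ₗ[ℤ] _) := by
  intro x
  set R := LinearMap.range
    (LinearMap.mulRight ℤ (MonoidAlgebra.single σ 1 - 1) :
      MonoidAlgebra ℤ G →ₗ[ℤ] MonoidAlgebra ℤ G) with hR
  have hpow : ∀ k : ℕ, (MonoidAlgebra.single (σ ^ k) 1 - 1 : MonoidAlgebra ℤ G) ∈ R := by
    intro k
    induction k with
    | zero =>
      rw [pow_zero, ← MonoidAlgebra.one_def, sub_self]
      exact zero_mem R
    | succ n ih =>
      have key : (MonoidAlgebra.single (σ ^ (n+1)) 1 - 1 : MonoidAlgebra ℤ G)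
          = (MonoidAlgebra.single (σ ^ n) 1 - 1)
            + MonoidAlgebra.single (σ ^ n) 1 * (MonoidAlgebra.single σ 1 - 1) := by
        rw [mul_sub, mul_one, MonoidAlgebra.single_mul_single, one_mul, ← pow_succ]
        abel
      rw [key]
      exact add_mem ih ⟨MonoidAlgebra.single (σ ^ n) 1, rfl⟩
  have hbas : ∀ g : G, (MonoidAlgebra.single g 1 - 1 : MonoidAlgebra ℤ G) ∈ R := by
    intro g
    obtain ⟨k, hk⟩ := hσ g
    rw [← hk]
    exact hpow k
  have hx : (x : MonoidAlgebra ℤ G) ∈ R := by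
    have h0 : ∑ g : G, (x : MonoidAlgebra ℤ G) g = 0 := mem_aug.mp x.2
    have hdec : (x : MonoidAlgebra ℤ G)
        = ∑ g : G, (x : MonoidAlgebra ℤ G) g • (MonoidAlgebra.single g 1 - 1 : MonoidAlgebra ℤ G) := by
      rw [eq_comm]
      simp only [smul_sub, Finset.sum_sub_distrib, ← Finset.sum_smul, h0, zero_smul, sub_zero]
      exact decomp _
    rw [hdec]
    exact Submodule.sum_mem _ fun g _ => Submodule.smul_mem _ _ (hbas g)
  obtain ⟨y, hy⟩ := hx
  exact ⟨y, Subtype.ext hy⟩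

lemma F_surj : Function.Surjective (F : MonoidAlgebra ℤ G →ₗ[ℤ] _) := by
  classical
  intro φ
  refine ⟨∑ g : G, φ ⟨MonoidAlgebra.single g 1 - 1, basis_mem g⟩ • MonoidAlgebra.single g 1, ?_⟩
  ext z
  rw [F_apply]
  have hy : ∀ h : G,
      ((∑ g : G, φ ⟨MonoidAlgebra.single g 1 - 1, basis_mem g⟩ • MonoidAlgebra.single g 1 :
        MonoidAlgebra ℤ G)) h = φ ⟨MonoidAlgebra.single h 1 - 1, basis_mem h⟩ := by
    intro h
    rw [MonoidAlgebra.coeff_sum, Finsupp.finset_sum_apply]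
    simp only [smul_apply']
    simp [MonoidAlgebra.coeff_single, Finsupp.single_apply]
  simp only [hy]
  have hz : (∑ h : G, (z : MonoidAlgebra ℤ G) h • (⟨MonoidAlgebra.single h 1 - 1, basis_mem h⟩ :
      augmentationIdeal G)) = z := by
    apply Subtype.ext
    push_cast [Submodule.coe_sum]
    have h0 : ∑ g : G, (z : MonoidAlgebra ℤ G) g = 0 := mem_aug.mp z.2
    simp only [smul_sub, Finset.sum_sub_distrib, ← Finset.sum_smul, h0, zero_smul, sub_zero]
    exact decomp _
  calc ∑ h : G, φ ⟨MonoidAlgebra.single h 1 - 1, basis_mem h⟩ * (z : MonoidAlgebra ℤ G) h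
      = φ (∑ h : G, (z : MonoidAlgebra ℤ G) h • ⟨MonoidAlgebra.single h 1 - 1, basis_mem h⟩) := by
        rw [map_sum]
        exact Finset.sum_congr rfl fun h _ => by rw [map_smul]; simp [mul_comm]
    _ = φ z := by rw [hz]


/-- The self-duality equivalence. -/
noncomputable def e (hσ : ∀ g : G, g ∈ Submonoid.powers σ) :
    augmentationIdeal G ≃ₗ[ℤ] Module.Dual ℤ (augmentationIdeal G) :=
  ((M σ).quotKerEquivOfSurjective (M_surj σ hσ)).symm ≪≫ₗ
    Submodule.quotEquivOfEq _ _ ((ker_M_eq σ hσ).trans ker_F_eq.symm) ≪≫ₗ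
    F.quotKerEquivOfSurjective F_surj

lemma e_M (hσ : ∀ g : G, g ∈ Submonoid.powers σ) (y : MonoidAlgebra ℤ G) :
    e σ hσ (M σ y) = F y := by
  have hq : ((M σ).quotKerEquivOfSurjective (M_surj σ hσ)) (Submodule.Quotient.mk y)
      = M σ y := by
    simp [LinearMap.quotKerEquivOfSurjective, LinearMap.quotKerEquivRange_apply_mk]
  have hq' : ((M σ).quotKerEquivOfSurjective (M_surj σ hσ)).symm (M σ y)
      = Submodule.Quotient.mk y := by
    rw [← hq, LinearEquiv.symm_apply_apply]
  rw [e, LinearEquiv.trans_apply, LinearEquiv.trans_apply, hq', Submodule.quotEquivOfEq_mk]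
  simp [LinearMap.quotKerEquivOfSurjective, LinearMap.quotKerEquivRange_apply_mk]

end AugAux

/-- for a finite cyclic group `G`, the augmentation ideal `IG` and its dual
lattice `IG* = Hom_ℤ(IG, ℤ)` are isomorphic as `ℤG`-modules, where `G` acts on `IG` by
(left) multiplication and on `IG*` by the contragredient action
`(g ⬝ φ)(x) = φ(g⁻¹ ⬝ x)`. -/
theorem augmentationIdeal_self_dual (G : Type*) [Group G] [Fintype G] [IsCyclic G] :
    ∃ e : augmentationIdeal G ≃ₗ[ℤ] Module.Dual ℤ (augmentationIdeal G),
      ∀ (g : G) (x y : augmentationIdeal G)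
        (hgx : MonoidAlgebra.of ℤ G g * (x : MonoidAlgebra ℤ G) ∈ augmentationIdeal G)
        (hgy : MonoidAlgebra.of ℤ G g⁻¹ * (y : MonoidAlgebra ℤ G) ∈ augmentationIdeal G),
        e ⟨_, hgx⟩ y = e x ⟨_, hgy⟩ := by
  classical
  obtain ⟨σ, hσz⟩ := IsCyclic.exists_generator (α := G)
  have hσ : ∀ g : G, g ∈ Submonoid.powers σ := fun g =>
    (mem_powers_iff_mem_zpowers).mpr (hσz g)
  refine ⟨AugAux.e σ hσ, ?_⟩
  intro g x y hgx hgy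
  obtain ⟨y₀, hy₀⟩ := AugAux.M_surj σ hσ x
  have hcoe : y₀ * (MonoidAlgebra.single σ 1 - 1) = (x : MonoidAlgebra ℤ G) := by
    rw [← AugAux.M_coe, hy₀]
  have hx1 : (⟨MonoidAlgebra.of ℤ G g * (x : MonoidAlgebra ℤ G), hgx⟩ : augmentationIdeal G)
      = AugAux.M σ (MonoidAlgebra.single g 1 * y₀) := by
    apply Subtype.ext
    rw [AugAux.M_coe, mul_assoc, hcoe]
    rfl
  rw [hx1, ← hy₀, AugAux.e_M, AugAux.e_M, AugAux.F_apply, AugAux.F_apply]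
  show ∑ h : G, (MonoidAlgebra.single g 1 * y₀ : MonoidAlgebra ℤ G) h * (y : MonoidAlgebra ℤ G) h
      = ∑ h : G, y₀ h * (MonoidAlgebra.single g⁻¹ 1 * (y : MonoidAlgebra ℤ G) : MonoidAlgebra ℤ G) h
  refine (Fintype.sum_equiv (Equiv.mulLeft g)
    (fun h => y₀ h * (MonoidAlgebra.single g⁻¹ 1 * (y : MonoidAlgebra ℤ G) : MonoidAlgebra ℤ G) h)
    (fun h => (MonoidAlgebra.single g 1 * y₀ : MonoidAlgebra ℤ G) h * (y : MonoidAlgebra ℤ G) h)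
    (fun h => ?_)).symm
  simp [MonoidAlgebra.coeff_single_mul_apply, inv_mul_cancel_left]
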